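/- Let C > 0, D ≥ 0, δ > 0, let h : ℝ → ℝ be continuous and nonnegative, and let u : ℝ → ℝ be differentiable and nonnegative with u(0) = 0 and |u'(t)| ≤ C·∫_{t−δ}^{t+δ} e^{−D|s|/2} h(s) ds + (D/2)·u(t) for all t ∈ ℝ. Then for every t ≥ 0 one has u(t) ≤ 2δC·e^{Dt/2}·∫_{−δ}^{t+δ} e^{−D|s|/2} h(s) ds, and for every t ≤ 0 one has u(t) ≤ 2δC·e^{−Dt/2}·∫_{t−δ}^{δ} e^{−D|s|/2} h(s) ds. -/

import Mathlib

open intervalIntegral MeasureTheory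


/-- One iteration step in the short-time-range case: from `u(0) = 0` and
`|u'(t)| ≤ C ∫_{t-δ}^{t+δ} e^{-D|s|/2} h(s) ds + (D/2) u(t)` one obtains the two-sided
bound with the enlarged integration domain. -/
theorem short_range_iteration_step (C D δ : ℝ) (hC : 0 < C) (hD : 0 ≤ D) (hδ : 0 < δ)
    (h u : ℝ → ℝ) (hh : Continuous h) (hh0 : ∀ t, 0 ≤ h t)
    (hu : Differentiable ℝ u) (hu0 : ∀ t, 0 ≤ u t) (hu00 : u 0 = 0)
    (hub : ∀ t : ℝ,
      |deriv u t| ≤ C * (∫ s in (t - δ)..(t + δ), Real.exp (-D * |s| / 2) * h s)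
        + (D / 2) * u t) :
    (∀ t : ℝ, 0 ≤ t →
      u t ≤ 2 * δ * C * Real.exp (D * t / 2) *
        ∫ s in (-δ)..(t + δ), Real.exp (-D * |s| / 2) * h s) ∧
    (∀ t : ℝ, t ≤ 0 →
      u t ≤ 2 * δ * C * Real.exp (-D * t / 2) *
        ∫ s in (t - δ)..δ, Real.exp (-D * |s| / 2) * h s) := by
  set g : ℝ → ℝ := fun s => Real.exp (-D * |s| / 2) * h s with hg_def
  have hgc : Continuous g :=
    (Real.continuous_exp.comp ((continuous_const.mul continuous_abs).div_const 2)).mul hh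
  have hg0 : ∀ s, 0 ≤ g s := fun s => mul_nonneg (Real.exp_pos _).le (hh0 s)
  have hgi : ∀ a b : ℝ, IntervalIntegrable g volume a b := fun a b => hgc.intervalIntegrable a b
  set Φ : ℝ → ℝ := fun x => ∫ s in (0:ℝ)..x, g s with hΦ_def
  have hΦd : ∀ x, HasDerivAt Φ (g x) x := fun x => (hgc.integral_hasStrictDerivAt 0 x).hasDerivAt
  have hΦdiff : Differentiable ℝ Φ := fun x => (hΦd x).differentiableAt
  have hΦc : Continuous Φ := hΦdiff.continuous
  have hΦi : ∀ a b : ℝ, IntervalIntegrable Φ volume a b := fun a b => hΦc.intervalIntegrable a b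
  set F : ℝ → ℝ := fun τ => Φ (τ + δ) - Φ (τ - δ) with hF_def
  have hFc : Continuous F :=
    (hΦc.comp (continuous_id.add continuous_const)).sub
      (hΦc.comp (continuous_id.sub continuous_const))
  have hFi : ∀ a b : ℝ, IntervalIntegrable F volume a b := fun a b => hFc.intervalIntegrable a b
  have hFeq : ∀ τ : ℝ, F τ = ∫ s in (τ - δ)..(τ + δ), g s := fun τ =>
    (integral_interval_sub_left (hgi 0 (τ + δ)) (hgi 0 (τ - δ)))
  have hF0 : ∀ τ, 0 ≤ F τ := by
    intro τ; rw [hFeq]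
    exact intervalIntegral.integral_nonneg (by linarith) fun s _ => hg0 s
  have hub' : ∀ t, |deriv u t| ≤ C * F t + (D / 2) * u t := by
    intro t; rw [hFeq]; exact hub t
  set W : ℝ → ℝ := fun x => ∫ τ in (0:ℝ)..x, F τ with hW_def
  have hWd : ∀ x, HasDerivAt W (F x) x := fun x => (hFc.integral_hasStrictDerivAt 0 x).hasDerivAt
  have hW0 : W 0 = 0 := integral_same
  -- antiderivative of Φ
  set K : ℝ → ℝ := fun x => ∫ s in (0:ℝ)..x, Φ s with hK_def
  have hKab : ∀ a b : ℝ, (∫ s in a..b, Φ s) = K b - K a := fun a b =>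
    (integral_interval_sub_left (hΦi 0 b) (hΦi 0 a)).symm
  have hWeq : ∀ t : ℝ, W t = ∫ x in (-δ)..δ, (Φ (x + t) - Φ x) := by
    intro t
    have e1 : (∫ x in (-δ)..δ, Φ (x + t)) = K (δ + t) - K (-δ + t) := by
      rw [integral_comp_add_right]; exact hKab _ _
    have e2 : (∫ x in (-δ)..δ, Φ x) = K δ - K (-δ) := hKab _ _
    have e3 : (∫ τ in (0:ℝ)..t, Φ (τ + δ)) = K (t + δ) - K (0 + δ) := by
      rw [integral_comp_add_right]; exact hKab _ _
    have e4 : (∫ τ in (0:ℝ)..t, Φ (τ - δ)) = K (t - δ) - K (0 - δ) := by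
      rw [integral_comp_sub_right]; exact hKab _ _
    have e5 : W t = (∫ τ in (0:ℝ)..t, Φ (τ + δ)) - ∫ τ in (0:ℝ)..t, Φ (τ - δ) := by
      rw [hW_def]
      exact integral_sub ((hΦc.comp (continuous_id.add continuous_const)).intervalIntegrable 0 t)
        ((hΦc.comp (continuous_id.sub continuous_const)).intervalIntegrable 0 t)
    have e6 : (∫ x in (-δ)..δ, (Φ (x + t) - Φ x))
        = (∫ x in (-δ)..δ, Φ (x + t)) - ∫ x in (-δ)..δ, Φ x :=
      integral_sub ((hΦc.comp (continuous_id.add continuous_const)).intervalIntegrable _ _)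
        (hΦi _ _)
    rw [e5, e3, e4, e6, e1, e2]; ring_nf
  -- key integral bounds
  have key_pos : ∀ t : ℝ, 0 ≤ t → W t ≤ 2 * δ * ∫ s in (-δ)..(t + δ), g s := by
    intro t ht
    have h2 : ∀ x ∈ Set.Icc (-δ) δ, Φ (x + t) - Φ x ≤ ∫ s in (-δ)..(t + δ), g s := by
      intro x hx
      have e : Φ (x + t) - Φ x = ∫ s in x..(x + t), g s :=
        integral_interval_sub_left (hgi 0 (x + t)) (hgi 0 x)
      rw [e]
      exact integral_mono_interval (by linarith [hx.1]) (by linarith) (by linarith [hx.2])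
        (Filter.Eventually.of_forall fun s => hg0 s) (hgi _ _)
    calc W t = ∫ x in (-δ)..δ, (Φ (x + t) - Φ x) := hWeq t
      _ ≤ ∫ _x in (-δ)..δ, (∫ s in (-δ)..(t + δ), g s) :=
          integral_mono_on (by linarith)
            (((hΦc.comp (continuous_id.add continuous_const)).sub hΦc).intervalIntegrable _ _)
            intervalIntegrable_const h2
      _ = 2 * δ * ∫ s in (-δ)..(t + δ), g s := by
          rw [intervalIntegral.integral_const, smul_eq_mul]; ring
  have key_neg : ∀ t : ℝ, t ≤ 0 → -W t ≤ 2 * δ * ∫ s in (t - δ)..δ, g s := by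
    intro t ht
    have h2 : ∀ x ∈ Set.Icc (-δ) δ, Φ x - Φ (x + t) ≤ ∫ s in (t - δ)..δ, g s := by
      intro x hx
      have e : Φ x - Φ (x + t) = ∫ s in (x + t)..x, g s :=
        integral_interval_sub_left (hgi 0 x) (hgi 0 (x + t))
      rw [e]
      exact integral_mono_interval (by linarith [hx.1]) (by linarith) (by linarith [hx.2])
        (Filter.Eventually.of_forall fun s => hg0 s) (hgi _ _)
    have e0 : -W t = ∫ x in (-δ)..δ, (Φ x - Φ (x + t)) := by
      rw [hWeq t, ← intervalIntegral.integral_neg]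
      congr 1 with x; ring
    calc -W t = ∫ x in (-δ)..δ, (Φ x - Φ (x + t)) := e0
      _ ≤ ∫ _x in (-δ)..δ, (∫ s in (t - δ)..δ, g s) :=
          integral_mono_on (by linarith)
            ((hΦc.sub (hΦc.comp (continuous_id.add continuous_const))).intervalIntegrable _ _)
            intervalIntegrable_const h2
      _ = 2 * δ * ∫ s in (t - δ)..δ, g s := by
          rw [intervalIntegral.integral_const, smul_eq_mul]; ring
  -- Gronwall-type monotonicity, positive side
  have pos : ∀ t : ℝ, 0 ≤ t → Real.exp (-(D / 2) * t) * u t ≤ C * W t := by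
    set P : ℝ → ℝ := fun x => Real.exp (-(D / 2) * x) * u x - C * W x with hP_def
    have hPd : ∀ x, HasDerivAt P
        (Real.exp (-(D / 2) * x) * deriv u x
          + (-(D / 2)) * Real.exp (-(D / 2) * x) * u x - C * F x) x := by
      intro x
      have h1 : HasDerivAt (fun y : ℝ => Real.exp (-(D / 2) * y))
          (Real.exp (-(D / 2) * x) * (-(D / 2))) x := by
        simpa using ((hasDerivAt_id x).const_mul (-(D / 2))).exp
      have h2 := h1.mul (hu x).hasDerivAt
      have h3 := (hWd x).const_mul C
      exact (h2.sub h3).congr_deriv (by ring)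
    have hPdiff : Differentiable ℝ P := fun x => (hPd x).differentiableAt
    have hPder : ∀ x, 0 ≤ x → deriv P x ≤ 0 := by
      intro x hx
      rw [(hPd x).deriv]
      have hexp1 : Real.exp (-(D / 2) * x) ≤ 1 := Real.exp_le_one_iff.mpr (by nlinarith)
      have hexp0 : (0:ℝ) < Real.exp (-(D / 2) * x) := Real.exp_pos _
      have hd' : deriv u x ≤ C * F x + (D / 2) * u x := (le_abs_self _).trans (hub' x)
      nlinarith [mul_nonneg hexp0.le (sub_nonneg.mpr hd'),
        mul_nonneg (sub_nonneg.mpr hexp1) (mul_nonneg hC.le (hF0 x))]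
    have hPant : AntitoneOn P (Set.Ici (0:ℝ)) := by
      apply antitoneOn_of_deriv_nonpos (convex_Ici 0) hPdiff.continuous.continuousOn
        hPdiff.differentiableOn
      intro x hx
      rw [interior_Ici] at hx
      exact hPder x (le_of_lt hx)
    intro t ht
    have hle : P t ≤ P 0 := hPant Set.self_mem_Ici (Set.mem_Ici.mpr ht) ht
    have hP0 : P 0 = 0 := by simp [hP_def, hu00, hW0]
    rw [hP0] at hle
    have : P t = Real.exp (-(D / 2) * t) * u t - C * W t := rfl
    linarith [this ▸ hle]
  -- negative side
  have neg : ∀ t : ℝ, t ≤ 0 → Real.exp ((D / 2) * t) * u t ≤ C * (-W t) := by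
    set Q : ℝ → ℝ := fun x => Real.exp ((D / 2) * x) * u x + C * W x with hQ_def
    have hQd : ∀ x, HasDerivAt Q
        (Real.exp ((D / 2) * x) * deriv u x
          + (D / 2) * Real.exp ((D / 2) * x) * u x + C * F x) x := by
      intro x
      have h1 : HasDerivAt (fun y : ℝ => Real.exp ((D / 2) * y))
          (Real.exp ((D / 2) * x) * (D / 2)) x := by
        simpa using ((hasDerivAt_id x).const_mul (D / 2)).exp
      have h2 := h1.mul (hu x).hasDerivAt
      have h3 := (hWd x).const_mul C
      exact (h2.add h3).congr_deriv (by ring)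
    have hQdiff : Differentiable ℝ Q := fun x => (hQd x).differentiableAt
    have hQder : ∀ x, x ≤ 0 → 0 ≤ deriv Q x := by
      intro x hx
      rw [(hQd x).deriv]
      have hexp1 : Real.exp ((D / 2) * x) ≤ 1 := Real.exp_le_one_iff.mpr (by nlinarith)
      have hexp0 : (0:ℝ) < Real.exp ((D / 2) * x) := Real.exp_pos _
      have hd' : -(C * F x + (D / 2) * u x) ≤ deriv u x := by
        have h1 := neg_abs_le (deriv u x)
        have h2 := hub' x
        linarith
      nlinarith [mul_nonneg hexp0.le (by linarith : (0:ℝ) ≤ deriv u x + (C * F x + (D / 2) * u x)),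
        mul_nonneg (sub_nonneg.mpr hexp1) (mul_nonneg hC.le (hF0 x))]
    have hQmono : MonotoneOn Q (Set.Iic (0:ℝ)) := by
      apply monotoneOn_of_deriv_nonneg (convex_Iic 0) hQdiff.continuous.continuousOn
        hQdiff.differentiableOn
      intro x hx
      rw [interior_Iic] at hx
      exact hQder x (le_of_lt hx)
    intro t ht
    have hle : Q t ≤ Q 0 := hQmono (Set.mem_Iic.mpr ht) Set.self_mem_Iic ht
    have hQ0 : Q 0 = 0 := by simp [hQ_def, hu00, hW0]
    rw [hQ0] at hle
    have : Q t = Real.exp ((D / 2) * t) * u t + C * W t := rfl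
    linarith [this ▸ hle]
  constructor
  · intro t ht
    have h1 := pos t ht
    have h2 := key_pos t ht
    have e : Real.exp (D * t / 2) * Real.exp (-(D / 2) * t) = 1 := by
      rw [← Real.exp_add]; ring_nf; exact Real.exp_zero
    calc u t = Real.exp (D * t / 2) * (Real.exp (-(D / 2) * t) * u t) := by
          rw [← mul_assoc, e, one_mul]
      _ ≤ Real.exp (D * t / 2) * (C * W t) :=
          mul_le_mul_of_nonneg_left h1 (Real.exp_pos _).le
      _ ≤ Real.exp (D * t / 2) * (C * (2 * δ * ∫ s in (-δ)..(t + δ), g s)) :=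
          mul_le_mul_of_nonneg_left (mul_le_mul_of_nonneg_left h2 hC.le) (Real.exp_pos _).le
      _ = 2 * δ * C * Real.exp (D * t / 2) * ∫ s in (-δ)..(t + δ), g s := by ring
  · intro t ht
    have h1 := neg t ht
    have h2 := key_neg t ht
    have e : Real.exp (-D * t / 2) * Real.exp ((D / 2) * t) = 1 := by
      rw [← Real.exp_add]; ring_nf; exact Real.exp_zero
    calc u t = Real.exp (-D * t / 2) * (Real.exp ((D / 2) * t) * u t) := by
          rw [← mul_assoc, e, one_mul]
      _ ≤ Real.exp (-D * t / 2) * (C * (-W t)) :=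
          mul_le_mul_of_nonneg_left h1 (Real.exp_pos _).le
      _ ≤ Real.exp (-D * t / 2) * (C * (2 * δ * ∫ s in (t - δ)..δ, g s)) :=
          mul_le_mul_of_nonneg_left (mul_le_mul_of_nonneg_left h2 hC.le) (Real.exp_pos _).le
      _ = 2 * δ * C * Real.exp (-D * t / 2) * ∫ s in (t - δ)..δ, g s := by ring
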